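/- For every positive integer k, every graph G without isolated edges satisfying χ(G) ≤ 3^k can be decomposed into k (possibly empty) edge-disjoint subgraphs G₁, …, G_k such that for each i, χ(G_i) ≤ 3 and G_i contains no isolated edges. -/

import Mathlib

open Classical in
/-- Degree of `v` in `G` (classical, so usable for arbitrary subgraphs). -/
noncomputable def deg {V : Type*} [Fintype V] (G : SimpleGraph V) (v : V) : ℕ :=
  G.degree v

open Classical in
/-- Weighted degree (sum) of `v` under edge weighting `w`. -/
noncomputable def wdeg {V : Type*} [Fintype V] (G : SimpleGraph V) (w : Sym2 V → ℕ) (v : V) : ℕ :=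
  ∑ e ∈ G.incidenceFinset v, w e

/-- `G` has no `K₂`-component: every edge is adjacent to some other edge. -/
def NoIsolatedEdge {V : Type*} (G : SimpleGraph V) : Prop :=
  ∀ u v, G.Adj u v → ∃ x, (G.Adj u x ∧ x ≠ v) ∨ (G.Adj v x ∧ x ≠ u)

/-- `G` admits a neighbour-sum-distinguishing edge weighting with weights in {1,2,3}. -/
def Fulfills123 {V : Type*} [Fintype V] (G : SimpleGraph V) : Prop :=
  ∃ w : Sym2 V → ℕ, (∀ e ∈ G.edgeSet, w e = 1 ∨ w e = 2 ∨ w e = 3) ∧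
    ∀ u v, G.Adj u v → wdeg G w u ≠ wdeg G w v


section TTTproof


open Classical

variable {V : Type*} [Fintype V]

/-- Maximal independent set extension. -/
lemma TTmaxIndep (G : SimpleGraph V) (s A : Finset V) (hA : A ⊆ s)
    (hi : ∀ a ∈ A, ∀ b ∈ A, ¬ G.Adj a b) :
    ∃ B : Finset V, A ⊆ B ∧ B ⊆ s ∧ (∀ a ∈ B, ∀ b ∈ B, ¬ G.Adj a b) ∧
      (∀ x ∈ s, x ∉ B → ∃ y ∈ B, G.Adj x y) := by
  classical
  set F : Finset (Finset V) :=
    s.powerset.filter (fun B => A ⊆ B ∧ ∀ a ∈ B, ∀ b ∈ B, ¬ G.Adj a b) with hF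
  have hAF : A ∈ F := by
    simp only [hF, Finset.mem_filter, Finset.mem_powerset]
    exact ⟨hA, le_refl _, hi⟩
  obtain ⟨B, hBF, hBmax⟩ : ∃ m ∈ F, ∀ x ∈ F, ¬ m < x := by
    obtain ⟨m, hm⟩ := Finset.exists_maximal ⟨A, hAF⟩
    exact ⟨m, hm.1, fun x hx hlt => hlt.not_ge (hm.2 hx hlt.le)⟩
  simp only [hF, Finset.mem_filter, Finset.mem_powerset] at hBF
  obtain ⟨hBs, hAB, hBind⟩ := hBF
  refine ⟨B, hAB, hBs, hBind, ?_⟩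
  intro x hxs hxB
  by_contra hno
  push_neg at hno
  have hins : insert x B ∈ F := by
    simp only [hF, Finset.mem_filter, Finset.mem_powerset]
    refine ⟨Finset.insert_subset hxs hBs, hAB.trans (Finset.subset_insert _ _), ?_⟩
    intro a ha b hb hadj
    rcases Finset.mem_insert.1 ha with ha' | ha'
    · rcases Finset.mem_insert.1 hb with hb' | hb'
      · rw [ha', hb'] at hadj; exact G.loopless.irrefl x hadj
      · exact hno b hb' (ha' ▸ hadj)
    · rcases Finset.mem_insert.1 hb with hb' | hb'
      · exact hno a ha' (hb' ▸ hadj.symm)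
      · exact hBind a ha' b hb' hadj
  exact hBmax _ hins (Finset.ssubset_insert hxB)

/-- Dominance ("greedy") colorings exist. -/
lemma TTdominance (G : SimpleGraph V) (N : ℕ) (h : G.Colorable N) :
    ∃ cls : V → ℕ, (∀ v, cls v < N) ∧ (∀ a b, G.Adj a b → cls a ≠ cls b) ∧
      (∀ v c, c < cls v → ∃ w, G.Adj v w ∧ cls w = c) := by
  classical
  obtain ⟨C⟩ := h
  have step : ∀ (j : ℕ) (R : Finset V), ∃ B : Finset V,
      (R.filter (fun v => (C v : ℕ) = j)) ⊆ B ∧ B ⊆ R ∧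
      (∀ a ∈ B, ∀ b ∈ B, ¬ G.Adj a b) ∧ (∀ x ∈ R, x ∉ B → ∃ y ∈ B, G.Adj x y) := by
    intro j R
    apply TTmaxIndep G R _ (Finset.filter_subset _ _)
    intro a ha b hb hadj
    simp only [Finset.mem_filter] at ha hb
    exact (C.valid hadj) (Fin.ext (ha.2.trans hb.2.symm))
  let MI : ℕ → Finset V → Finset V := fun j R => (step j R).choose
  let RR : ℕ → Finset V := fun j => Nat.rec (Finset.univ) (fun j R => R \ MI j R) j
  have hRRsucc : ∀ j, RR (j+1) = RR j \ MI j (RR j) := fun j => rfl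
  have hMI : ∀ j, (RR j).filter (fun v => (C v : ℕ) = j) ⊆ MI j (RR j) ∧
      MI j (RR j) ⊆ RR j ∧
      (∀ a ∈ MI j (RR j), ∀ b ∈ MI j (RR j), ¬ G.Adj a b) ∧
      (∀ x ∈ RR j, x ∉ MI j (RR j) → ∃ y ∈ MI j (RR j), G.Adj x y) :=
    fun j => (step j (RR j)).choose_spec
  have hmono : ∀ j, RR (j+1) ⊆ RR j := by
    intro j; rw [hRRsucc]; exact Finset.sdiff_subset
  have hmono' : ∀ (i j : ℕ), i ≤ j → RR j ⊆ RR i := by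
    intro i j hij
    induction j with
    | zero =>
      have : i = 0 := by omega
      subst this; exact Finset.Subset.refl _
    | succ j ih =>
      rcases Nat.lt_or_ge i (j+1) with h' | h'
      · exact fun x hx => ih (by omega) ((hmono j) hx)
      · have : i = j + 1 := by omega
        subst this; exact Finset.Subset.refl _
  have hexitpf : ∀ v : V, v ∈ RR ((C v : ℕ)) → v ∉ RR ((C v : ℕ) + 1) := by
    intro v hv hv'
    rw [hRRsucc] at hv'
    have hv1 := Finset.mem_sdiff.1 hv'
    exact hv1.2 ((hMI (C v)).1 (Finset.mem_filter.2 ⟨hv1.1, rfl⟩))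
  have hexit : ∀ v : V, ∃ j, v ∉ RR (j + 1) := by
    intro v
    rcases Classical.em (v ∈ RR ((C v : ℕ))) with hv | hv
    · exact ⟨_, hexitpf v hv⟩
    · rcases Nat.eq_zero_or_pos (C v : ℕ) with h0 | hpos
      · rw [h0] at hv; exact absurd (Finset.mem_univ v) hv
      · obtain ⟨i, hi⟩ := Nat.exists_eq_succ_of_ne_zero (by omega : (C v:ℕ) ≠ 0)
        refine ⟨i, ?_⟩; rw [hi] at hv; exact hv
  let cls : V → ℕ := fun v => Nat.find (hexit v)
  have hclsspec : ∀ v, v ∉ RR (cls v + 1) := fun v => Nat.find_spec (hexit v)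
  have hin : ∀ v j, j ≤ cls v → v ∈ RR j := by
    intro v j hj
    rcases Nat.eq_zero_or_pos j with rfl | hpos
    · exact Finset.mem_univ v
    · obtain ⟨i, rfl⟩ := Nat.exists_eq_succ_of_ne_zero (by omega : j ≠ 0)
      by_contra hnot
      have hlt : i < cls v := by omega
      exact (Nat.find_min (hexit v) hlt) hnot
  have hclsCv : ∀ v, cls v ≤ (C v : ℕ) := by
    intro v
    by_contra hgt
    push_neg at hgt
    exact hexitpf v (hin v ((C v : ℕ)) (by omega)) (hin v ((C v : ℕ) + 1) (by omega))
  have hmem : ∀ v, v ∈ MI (cls v) (RR (cls v)) := by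
    intro v
    have h1 : v ∈ RR (cls v) := hin v _ le_rfl
    have h2 := hclsspec v
    rw [hRRsucc] at h2
    by_contra hnot
    exact h2 (Finset.mem_sdiff.2 ⟨h1, hnot⟩)
  have hclsMI : ∀ v j, v ∈ MI j (RR j) → cls v = j := by
    intro v j hv
    have hvRj : v ∈ RR j := (hMI j).2.1 hv
    have hnot : v ∉ RR (j+1) := by
      rw [hRRsucc]; intro hc; exact (Finset.mem_sdiff.1 hc).2 hv
    have h1 : cls v ≤ j := Nat.find_le hnot
    rcases Nat.lt_or_ge (cls v) j with hlt | hge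
    · exact absurd (hmono' (cls v + 1) j (by omega) hvRj) (hclsspec v)
    · omega
  refine ⟨cls, ?_, ?_, ?_⟩
  · intro v; exact lt_of_le_of_lt (hclsCv v) (C v).isLt
  · intro a b hadj hcls
    have ha := hmem a
    have hb := hmem b
    rw [hcls] at ha
    exact (hMI (cls b)).2.2.1 a ha b hb hadj
  · intro v c hc
    have hvR : v ∈ RR (c+1) := hin v (c+1) (by omega)
    rw [hRRsucc] at hvR
    have hv1 := Finset.mem_sdiff.1 hvR
    obtain ⟨y, hy, hadj⟩ := (hMI c).2.2.2 v hv1.1 hv1.2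
    exact ⟨y, hadj, hclsMI y c hy⟩



namespace TTT

noncomputable section
open Classical

variable {V : Type*}

def blkf (cls : V → ℕ) (v : V) : ℕ := cls v / 3

def E0 (G : SimpleGraph V) (cls : V → ℕ) : SimpleGraph V where
  Adj a b := G.Adj a b ∧ blkf cls a = blkf cls b
  symm := ⟨by intro a b h; exact ⟨h.1.symm, h.2.symm⟩⟩
  loopless := ⟨by intro a h; exact G.loopless.irrefl a h.1⟩

def Bd (G : SimpleGraph V) (cls : V → ℕ) (u v : V) : Prop :=
  (E0 G cls).Adj u v ∧ (∀ w, (E0 G cls).Adj u w → w = v) ∧ (∀ w, (E0 G cls).Adj v w → w = u)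

def BdL (G : SimpleGraph V) (cls : V → ℕ) (u v : V) : Prop :=
  Bd G cls u v ∧ cls u < cls v

def yCh (G : SimpleGraph V) (cls : V → ℕ) (u : V) : V :=
  if h : ∃ w, G.Adj u w ∧ blkf cls w ≠ 0 then h.choose else u

def xCh (G : SimpleGraph V) (cls : V → ℕ) (v : V) : V :=
  if h : ∃ w, G.Adj v w ∧ cls w = 0 then h.choose else v

def TII (G : SimpleGraph V) (cls : V → ℕ) (a b : V) : Prop :=
  (∃ v, BdL G cls a v) ∧ blkf cls a = 0 ∧ b = yCh G cls a

def TI (G : SimpleGraph V) (cls : V → ℕ) (a b : V) : Prop :=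
  (∃ u, BdL G cls u a) ∧ blkf cls a ≠ 0 ∧ b = xCh G cls a ∧ ¬ (∃ u, TII G cls u a)

def Gam (G : SimpleGraph V) (cls : V → ℕ) : SimpleGraph V where
  Adj a b := a ≠ b ∧ (TII G cls a b ∨ TII G cls b a ∨ TI G cls a b ∨ TI G cls b a)
  symm := ⟨by intro a b h; exact ⟨h.1.symm, by tauto⟩⟩
  loopless := ⟨by intro a h; exact h.1 rfl⟩

def AA (G : SimpleGraph V) (cls : V → ℕ) : SimpleGraph V := E0 G cls ⊔ Gam G cls

def fpos (cls : V → ℕ) (x : V) : Fin 3 := ⟨cls x % 3, by omega⟩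

def isBU (G : SimpleGraph V) (cls : V → ℕ) (x : V) : Prop :=
  (∃ v, BdL G cls x v) ∧ cls x = 0

def isBV (G : SimpleGraph V) (cls : V → ℕ) (x : V) : Prop :=
  ∃ u, BdL G cls u x ∧ cls u = 0

def colf (G : SimpleGraph V) (cls : V → ℕ) (x : V) : Fin 3 :=
  if hU : isBU G cls x then (if cls (yCh G cls x) % 3 = 0 then 2 else 0)
  else if hV : isBV G cls x then fpos cls (yCh G cls hV.choose)
  else fpos cls x

end

end TTT

open TTT

set_option maxHeartbeats 1000000 in
open Classical in
lemma TTcaseB {V : Type*} [Fintype V] (G : SimpleGraph V) (k : ℕ)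
    (hdeg : ∀ v x, G.Adj v x → ∃ w, G.Adj v w ∧ w ≠ x)
    (cls : V → ℕ) (hlt : ∀ v, cls v < 3 ^ (k + 1))
    (hP1 : ∀ a b, G.Adj a b → cls a ≠ cls b)
    (hP2 : ∀ v c, c < cls v → ∃ w, G.Adj v w ∧ cls w = c) :
    ∃ A : SimpleGraph V, A ≤ G ∧ A.Colorable 3 ∧ NoIsolatedEdge A ∧
      (G \ A).Colorable (3 ^ k) ∧ NoIsolatedEdge (G \ A) := by
  classical
  set blk : V → ℕ := blkf cls with hblkdef
  have hblkv : ∀ v, blk v = cls v / 3 := fun v => rfl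
  have hdiv : ∀ v, 3 * blk v ≤ cls v ∧ cls v < 3 * blk v + 3 := by
    intro v; rw [hblkv]; omega
  have hE0adj : ∀ a b, (E0 G cls).Adj a b ↔ (G.Adj a b ∧ blk a = blk b) := fun a b => Iff.rfl
  have hBadsymm : ∀ a b, Bd G cls a b → Bd G cls b a := by
    intro a b ⟨h1, h2, h3⟩; exact ⟨h1.symm, h3, h2⟩
  -- structure of bad pairs
  have hstruct : ∀ u v, BdL G cls u v → cls u = 3 * blk u ∧ cls v = 3 * blk u + 1 := by
    intro u v hb
    obtain ⟨⟨hadj, huq, hvq⟩, hord⟩ := hb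
    obtain ⟨hGuv, hblkeq⟩ := (hE0adj u v).1 hadj
    have h3u := hdiv u
    have h3v := hdiv v
    have hub : cls v < 3 * blk u + 2 := by
      by_contra hge
      push_neg at hge
      have hv2 : cls v = 3 * blk u + 2 := by omega
      obtain ⟨w0, hw0a, hw0c⟩ := hP2 v (3 * blk u) (by omega)
      obtain ⟨w1, hw1a, hw1c⟩ := hP2 v (3 * blk u + 1) (by omega)
      have hw0b : blk w0 = blk u := by rw [hblkv, hblkv]; omega
      have hw1b : blk w1 = blk u := by rw [hblkv, hblkv]; omega
      have e0 : w0 = u := hvq w0 ((hE0adj v w0).2 ⟨hw0a, by rw [hw0b, hblkeq]⟩)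
      have e1 : w1 = u := hvq w1 ((hE0adj v w1).2 ⟨hw1a, by rw [hw1b, hblkeq]⟩)
      rw [e0] at hw0c; rw [e1] at hw1c; omega
    constructor <;> omega
  -- choices
  have hbad0E : ∀ u v, BdL G cls u v → blk u = 0 → ∃ w, G.Adj u w ∧ blkf cls w ≠ 0 := by
    intro u v hb h0
    obtain ⟨⟨hadj, huq, hvq⟩, hord⟩ := hb
    obtain ⟨hGuv, hblkeq⟩ := (hE0adj u v).1 hadj
    obtain ⟨w, hw, hwv⟩ := hdeg u v hGuv
    refine ⟨w, hw, ?_⟩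
    intro hbw0
    exact hwv (huq w ((hE0adj u w).2 ⟨hw, by rw [← hblkdef] at hbw0; rw [hbw0, h0]⟩))
  have hbadPE : ∀ u v, BdL G cls u v → ∃ w, G.Adj v w ∧ cls w = 0 := by
    intro u v hb
    have hst := hstruct u v hb
    exact hP2 v 0 (by omega)
  have hyCh : ∀ u, (∃ w, G.Adj u w ∧ blkf cls w ≠ 0) →
      G.Adj u (yCh G cls u) ∧ blk (yCh G cls u) ≠ 0 := by
    intro u h
    have : yCh G cls u = h.choose := dif_pos h
    rw [this, hblkdef]
    exact h.choose_spec
  have hxCh : ∀ v, (∃ w, G.Adj v w ∧ cls w = 0) →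
      G.Adj v (xCh G cls v) ∧ cls (xCh G cls v) = 0 := by
    intro v h
    have : xCh G cls v = h.choose := dif_pos h
    rw [this]
    exact h.choose_spec
  have hTIIspec : ∀ a b, TII G cls a b → G.Adj a b ∧ blk a = 0 ∧ blk b ≠ 0 ∧ cls a = 0 := by
    intro a b h
    obtain ⟨⟨v, hv⟩, h0, hbeq⟩ := h
    rw [← hblkdef] at h0
    have hex := hbad0E a v hv h0
    have hs := hyCh a hex
    have hcls0 : cls a = 0 := by
      have := (hstruct a v hv).1; rw [h0] at this; omega
    subst hbeq
    exact ⟨hs.1, h0, hs.2, hcls0⟩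
  have hTIspec : ∀ a b, TI G cls a b →
      G.Adj a b ∧ blk a ≠ 0 ∧ cls b = 0 ∧ cls a = 3 * blk a + 1 := by
    intro a b h
    obtain ⟨⟨u, hu⟩, h0, hbeq, hnT⟩ := h
    rw [← hblkdef] at h0
    have hex := hbadPE u a hu
    have hs := hxCh a hex
    have hst := hstruct u a hu
    have hblkeq : blk u = blk a := ((hE0adj u a).1 hu.1.1).2
    subst hbeq
    exact ⟨hs.1, h0, hs.2, by rw [← hblkeq]; exact hst.2⟩
  have hΓadj : ∀ a b, (Gam G cls).Adj a b ↔
      (a ≠ b ∧ (TII G cls a b ∨ TII G cls b a ∨ TI G cls a b ∨ TI G cls b a)) :=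
    fun a b => Iff.rfl
  have hΓG : ∀ a b, (Gam G cls).Adj a b → G.Adj a b := by
    intro a b hab
    obtain ⟨hne, h⟩ := (hΓadj a b).1 hab
    rcases h with h | h | h | h
    · exact (hTIIspec a b h).1
    · exact (hTIIspec b a h).1.symm
    · exact (hTIspec a b h).1
    · exact (hTIspec b a h).1.symm
  have hΓ0 : ∀ a b, (Gam G cls).Adj a b → cls a = 0 ∨ cls b = 0 := by
    intro a b hab
    obtain ⟨hne, h⟩ := (hΓadj a b).1 hab
    rcases h with h | h | h | h
    · exact Or.inl (hTIIspec a b h).2.2.2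
    · exact Or.inr (hTIIspec b a h).2.2.2
    · exact Or.inr (hTIspec a b h).2.2.1
    · exact Or.inl (hTIspec b a h).2.2.1
  have hAadj : ∀ a b, (AA G cls).Adj a b ↔ ((E0 G cls).Adj a b ∨ (Gam G cls).Adj a b) :=
    fun a b => SimpleGraph.sup_adj _ _ _ _
  have hAG : AA G cls ≤ G := by
    intro a b hab
    rcases (hAadj a b).1 hab with h | h
    · exact ((hE0adj a b).1 h).1
    · exact hΓG a b h
  have hBadj : ∀ a b, (G \ AA G cls).Adj a b ↔ (G.Adj a b ∧ ¬ (AA G cls).Adj a b) :=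
    fun a b => SimpleGraph.sdiff_adj _ _ _ _
  have hBcross : ∀ a b, (G \ AA G cls).Adj a b → blk a ≠ blk b := by
    intro a b hab heq
    exact ((hBadj a b).1 hab).2
      ((hAadj a b).2 (Or.inl ((hE0adj a b).2 ⟨((hBadj a b).1 hab).1, heq⟩)))
  -- KEY 1 : companions in G \ A
  have hKey1 : ∀ a y, (G \ AA G cls).Adj a y → blk a < blk y →
      ∃ w, (G \ AA G cls).Adj y w ∧ w ≠ a := by
    intro a y hady hblt
    have hy3 : 3 ≤ cls y := by
      have := hdiv y; omega
    obtain ⟨w1, hw1G, hw1c⟩ := hP2 y 1 (by omega)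
    obtain ⟨w2, hw2G, hw2c⟩ := hP2 y 2 (by omega)
    have hclsy0 : cls y ≠ 0 := by omega
    have hBw : ∀ w, G.Adj y w → (cls w = 1 ∨ cls w = 2) → (G \ AA G cls).Adj y w := by
      intro w hGyw hc
      rw [hBadj]
      refine ⟨hGyw, ?_⟩
      intro hA
      rcases (hAadj y w).1 hA with h | h
      · have hwb : blk w = 0 := by rw [hblkv]; omega
        have hyb : blk y = blk w := ((hE0adj y w).1 h).2
        omega
      · rcases hΓ0 y w h with h0 | h0
        · exact hclsy0 h0
        · omega
    have hB1 := hBw w1 hw1G (Or.inl hw1c)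
    have hB2 := hBw w2 hw2G (Or.inr hw2c)
    by_cases h1a : w1 = a
    · refine ⟨w2, hB2, ?_⟩
      intro h2a
      rw [h1a] at hw1c; rw [h2a] at hw2c; omega
    · exact ⟨w1, hB1, h1a⟩
  have hBiso : NoIsolatedEdge (G \ AA G cls) := by
    intro a b hab
    have hne := hBcross a b hab
    rcases Nat.lt_or_ge (blk a) (blk b) with h | h
    · obtain ⟨w, hw, hwa⟩ := hKey1 a b hab h
      exact ⟨w, Or.inr ⟨hw, hwa⟩⟩
    · have h' : blk b < blk a := by omega
      obtain ⟨w, hw, hwb⟩ := hKey1 b a hab.symm h'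
      exact ⟨w, Or.inl ⟨hw, hwb⟩⟩
  have hBcol : (G \ AA G cls).Colorable (3 ^ k) := by
    have hblkub : ∀ v, blk v < 3 ^ k := by
      intro v
      have := hlt v
      have h3 : (3:ℕ) ^ (k+1) = 3 ^ k * 3 := pow_succ 3 k
      rw [hblkv]
      omega
    refine ⟨SimpleGraph.Coloring.mk (fun v => ⟨blk v, hblkub v⟩) ?_⟩
    intro a b hab hfe
    have heq : blk a = blk b := congrArg Fin.val hfe
    exact hBcross a b hab heq
  -- companions for bad edges inside A
  have hbadcomp : ∀ u v, BdL G cls u v →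
      ∃ x, ((AA G cls).Adj u x ∧ x ≠ v) ∨ ((AA G cls).Adj v x ∧ x ≠ u) := by
    intro u v hL
    have hst := hstruct u v hL
    have hblkeq : blk u = blk v := ((hE0adj u v).1 hL.1.1).2
    by_cases h0 : blk u = 0
    · have hTIIu : TII G cls u (yCh G cls u) := ⟨⟨v, hL⟩, h0, rfl⟩
      have hs := hTIIspec u (yCh G cls u) hTIIu
      refine ⟨yCh G cls u, Or.inl ⟨(hAadj _ _).2 (Or.inr ((hΓadj _ _).2
        ⟨G.ne_of_adj hs.1, Or.inl hTIIu⟩)), ?_⟩⟩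
      intro he
      rw [he] at hs
      exact hs.2.2.1 (by rw [← hblkeq, h0])
    · by_cases hT : ∃ u', TII G cls u' v
      · obtain ⟨u', hu'⟩ := hT
        have hs := hTIIspec u' v hu'
        have hΓ' : (Gam G cls).Adj v u' :=
          ((hΓadj u' v).2 ⟨G.ne_of_adj hs.1, Or.inl hu'⟩).symm
        refine ⟨u', Or.inr ⟨(hAadj _ _).2 (Or.inr hΓ'), ?_⟩⟩
        intro he
        apply h0
        rw [← he]
        exact hs.2.1
      · have hTIv : TI G cls v (xCh G cls v) := ⟨⟨u, hL⟩, by rw [← hblkdef, ← hblkeq]; exact h0, rfl, hT⟩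
        have hs := hTIspec v (xCh G cls v) hTIv
        refine ⟨xCh G cls v, Or.inr ⟨(hAadj _ _).2 (Or.inr ((hΓadj _ _).2
          ⟨G.ne_of_adj hs.1, Or.inr (Or.inr (Or.inl hTIv))⟩)), ?_⟩⟩
        intro he
        have hu0 : cls u ≠ 0 := by
          have := hdiv u
          have hbp : blk u ≠ 0 := h0
          have := hst.1
          rcases Nat.eq_zero_or_pos (blk u) with hz | hz
          · exact absurd hz hbp
          · omega
        rw [he] at hs
        exact hu0 hs.2.2.1
  have hAiso : NoIsolatedEdge (AA G cls) := by
    intro a b hab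
    rcases (hAadj a b).1 hab with hE | hΓ'
    · by_cases hbad : Bd G cls a b
      · have hcne := hP1 a b ((hE0adj a b).1 hE).1
        rcases Nat.lt_or_ge (cls a) (cls b) with hlt' | hge
        · exact hbadcomp a b ⟨hbad, hlt'⟩
        · have hlt' : cls b < cls a := by omega
          obtain ⟨x, hx⟩ := hbadcomp b a ⟨hBadsymm a b hbad, hlt'⟩
          exact ⟨x, hx.symm⟩
      · have hn : ¬((∀ w, (E0 G cls).Adj a w → w = b) ∧ (∀ w, (E0 G cls).Adj b w → w = a)) := by
          intro hc; exact hbad ⟨hE, hc.1, hc.2⟩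
        rcases not_and_or.1 hn with h | h
        · push_neg at h
          obtain ⟨w, hw, hwb⟩ := h
          exact ⟨w, Or.inl ⟨(hAadj _ _).2 (Or.inl hw), hwb⟩⟩
        · push_neg at h
          obtain ⟨w, hw, hwa⟩ := h
          exact ⟨w, Or.inr ⟨(hAadj _ _).2 (Or.inl hw), hwa⟩⟩
    · have hcomp : ∀ p q, TII G cls p q ∨ TI G cls p q → ∃ x, (E0 G cls).Adj p x ∧ x ≠ q := by
        intro p q hpq
        rcases hpq with h | h
        · obtain ⟨⟨v, hv⟩, h0, hq⟩ := h
          have hs := hTIIspec p q ⟨⟨v, hv⟩, h0, hq⟩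
          refine ⟨v, hv.1.1, ?_⟩
          intro he
          have hbv : blk v = blk p := ((hE0adj p v).1 hv.1.1).2.symm
          rw [he] at hbv
          exact hs.2.2.1 (by rw [hbv]; exact hs.2.1)
        · obtain ⟨⟨u, hu⟩, h0, hq, hnT⟩ := h
          have hs := hTIspec p q ⟨⟨u, hu⟩, h0, hq, hnT⟩
          refine ⟨u, (hu.1.1).symm, ?_⟩
          intro he
          have hstu := hstruct u p hu
          have hu0 : cls u ≠ 0 := by
            have hbe : blk u = blk p := ((hE0adj u p).1 hu.1.1).2
            have := hdiv u
            rcases Nat.eq_zero_or_pos (blk u) with hz | hz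
            · rw [hbe] at hz; exact fun _ => hs.2.1 hz
            · omega
          rw [he] at hu0
          exact hu0 hs.2.2.1
      obtain ⟨hne, h⟩ := (hΓadj a b).1 hΓ'
      rcases h with h | h | h | h
      · obtain ⟨x, hx1, hx2⟩ := hcomp a b (Or.inl h)
        exact ⟨x, Or.inl ⟨(hAadj _ _).2 (Or.inl hx1), hx2⟩⟩
      · obtain ⟨x, hx1, hx2⟩ := hcomp b a (Or.inl h)
        exact ⟨x, Or.inr ⟨(hAadj _ _).2 (Or.inl hx1), hx2⟩⟩
      · obtain ⟨x, hx1, hx2⟩ := hcomp a b (Or.inr h)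
        exact ⟨x, Or.inl ⟨(hAadj _ _).2 (Or.inl hx1), hx2⟩⟩
      · obtain ⟨x, hx1, hx2⟩ := hcomp b a (Or.inr h)
        exact ⟨x, Or.inr ⟨(hAadj _ _).2 (Or.inl hx1), hx2⟩⟩
  -- the colouring of A
  have hfposval : ∀ x, (fpos cls x : Fin 3).val = cls x % 3 := fun x => rfl
  have hcolU : ∀ u, isBU G cls u →
      colf G cls u = (if cls (yCh G cls u) % 3 = 0 then 2 else 0) := by
    intro u hU
    exact dif_pos hU
  have hpartneruq : ∀ u u' v, BdL G cls u v → BdL G cls u' v → u' = u := by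
    intro u u' v h h'
    exact h.1.2.2 u' h'.1.1.symm
  have hcolV : ∀ u v, BdL G cls u v → cls u = 0 → colf G cls v = fpos cls (yCh G cls u) := by
    intro u v hL hc
    have hst := hstruct u v hL
    have hnotU : ¬ isBU G cls v := by
      intro hU
      have : cls v = 0 := hU.2
      omega
    have hV : isBV G cls v := ⟨u, hL, hc⟩
    have h1 : colf G cls v = fpos cls (yCh G cls hV.choose) := by
      rw [colf, dif_neg hnotU, dif_pos hV]
    rw [h1, hpartneruq u hV.choose v hL hV.choose_spec.1]
  have hcolPlain : ∀ x, ¬ isBU G cls x → ¬ isBV G cls x → colf G cls x = fpos cls x := by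
    intro x h1 h2; rw [colf, dif_neg h1, dif_neg h2]
  have hUne1 : ∀ u, isBU G cls u → colf G cls u ≠ ⟨1, by norm_num⟩ := by
    intro u hU
    rw [hcolU u hU]
    split <;> decide
  have hUneY : ∀ u, isBU G cls u → colf G cls u ≠ fpos cls (yCh G cls u) := by
    intro u hU
    rw [hcolU u hU]
    by_cases h : cls (yCh G cls u) % 3 = 0
    · rw [if_pos h]
      intro he
      have := congrArg Fin.val he
      rw [hfposval] at this
      omega
    · rw [if_neg h]
      intro he
      have := congrArg Fin.val he
      rw [hfposval] at this
      omega
  have hplain_of_badL_hi : ∀ u v, BdL G cls u v → blk u ≠ 0 →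
      (¬ isBU G cls u ∧ ¬ isBV G cls u ∧ ¬ isBU G cls v ∧ ¬ isBV G cls v) := by
    intro u v hL h0
    have hst := hstruct u v hL
    have hblkpos : 1 ≤ blk u := Nat.pos_of_ne_zero h0
    refine ⟨?_, ?_, ?_, ?_⟩
    · intro hU; have := hU.2; omega
    · intro hV
      obtain ⟨u0, h0', hc0⟩ := hV
      have he : u0 = v := hL.1.2.1 u0 h0'.1.1.symm
      rw [he] at hc0; omega
    · intro hU; have := hU.2; omega
    · intro hV
      obtain ⟨u0, h0', hc0⟩ := hV
      have he : u0 = u := hL.1.2.2 u0 h0'.1.1.symm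
      rw [he] at hc0; omega
  have hcolprop : ∀ a b, (AA G cls).Adj a b → colf G cls a ≠ colf G cls b := by
    have hbadLcol : ∀ u v, BdL G cls u v → colf G cls u ≠ colf G cls v := by
      intro u v hL
      have hst := hstruct u v hL
      by_cases h0 : blk u = 0
      · have hc0 : cls u = 0 := by rw [hst.1, h0]
        have hU : isBU G cls u := ⟨⟨v, hL⟩, hc0⟩
        rw [hcolV u v hL hc0]
        exact hUneY u hU
      · obtain ⟨h1, h2, h3, h4⟩ := hplain_of_badL_hi u v hL h0
        rw [hcolPlain u h1 h2, hcolPlain v h3 h4]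
        intro he
        have := congrArg Fin.val he
        rw [hfposval, hfposval] at this
        have hcu : cls u = 3 * blk u := hst.1
        have hcv : cls v = 3 * blk u + 1 := hst.2
        omega
    have hTIIcol : ∀ a b, TII G cls a b → colf G cls a ≠ colf G cls b := by
      intro a b h
      have hs := hTIIspec a b h
      have hU : isBU G cls a := ⟨h.1, hs.2.2.2⟩
      have hplainb : colf G cls b = fpos cls b := by
        apply hcolPlain
        · intro hUb
          have hb0 : cls b = 0 := hUb.2
          have hdb := hdiv b
          have : blk b = 0 := by omega
          exact hs.2.2.1 this
        · intro hVb
          obtain ⟨u0, h0', hc0⟩ := hVb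
          have hbe : blk u0 = blk b := ((hE0adj u0 b).1 h0'.1.1).2
          have hz : blk u0 = 0 := by rw [hblkv]; omega
          rw [hz] at hbe
          exact hs.2.2.1 hbe.symm
      rw [hplainb]
      have hbeq : b = yCh G cls a := h.2.2
      rw [hbeq]
      exact hUneY a hU
    have hTIcol : ∀ a b, TI G cls a b → colf G cls a ≠ colf G cls b := by
      intro a b h
      have hs := hTIspec a b h
      obtain ⟨⟨u, hu⟩, h0, hbeq, hnT⟩ := h
      have hbua : blk u = blk a := ((hE0adj u a).1 hu.1.1).2
      have hplains := hplain_of_badL_hi u a hu (by rw [hbua]; exact hs.2.1)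
      have hcola : colf G cls a = fpos cls a := hcolPlain a hplains.2.2.1 hplains.2.2.2
      have hca : cls a = 3 * blk a + 1 := hs.2.2.2
      by_cases hUb : isBU G cls b
      · rw [hcola]
        intro he
        apply hUne1 b hUb
        rw [← he]
        apply Fin.ext
        show cls a % 3 = 1
        omega
      · have hVb : ¬ isBV G cls b := by
          intro hVb
          obtain ⟨u0, h0', hc0⟩ := hVb
          have hstb := hstruct u0 b h0'
          have hcb : cls b = 0 := hs.2.2.1
          omega
        rw [hcola, hcolPlain b hUb hVb]
        intro he
        have := congrArg Fin.val he
        rw [hfposval, hfposval] at this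
        have hcb : cls b = 0 := hs.2.2.1
        omega
    intro a b hab
    rcases (hAadj a b).1 hab with hE | hΓ'
    · by_cases hbad : Bd G cls a b
      · rcases Nat.lt_or_ge (cls a) (cls b) with hlt' | hge
        · exact hbadLcol a b ⟨hbad, hlt'⟩
        · have hcne := hP1 a b ((hE0adj a b).1 hE).1
          exact (hbadLcol b a ⟨hBadsymm a b hbad, by omega⟩).symm
      · have hplain : ∀ p q, (E0 G cls).Adj p q → ¬ Bd G cls p q →
            (¬ isBU G cls p ∧ ¬ isBV G cls p) := by
          intro p q hpq hnb
          constructor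
          · intro hU
            obtain ⟨⟨v', hv'⟩, hc⟩ := hU
            have he : q = v' := hv'.1.2.1 q hpq
            rw [← he] at hv'
            exact hnb hv'.1
          · intro hV
            obtain ⟨u0, h0', hc0⟩ := hV
            have he : q = u0 := h0'.1.2.2 q hpq
            rw [← he] at h0'
            exact hnb (hBadsymm q p h0'.1)
        obtain ⟨ha1, ha2⟩ := hplain a b hE hbad
        obtain ⟨hb1, hb2⟩ := hplain b a hE.symm (fun hc => hbad (hBadsymm b a hc))
        rw [hcolPlain a ha1 ha2, hcolPlain b hb1 hb2]
        intro he
        have hval := congrArg Fin.val he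
        rw [hfposval, hfposval] at hval
        have hcne := hP1 a b ((hE0adj a b).1 hE).1
        have hbe : blk a = blk b := ((hE0adj a b).1 hE).2
        rw [hblkv, hblkv] at hbe
        omega
    · obtain ⟨hne, h⟩ := (hΓadj a b).1 hΓ'
      rcases h with h | h | h | h
      · exact hTIIcol a b h
      · exact (hTIIcol b a h).symm
      · exact hTIcol a b h
      · exact (hTIcol b a h).symm
  have hAcol : (AA G cls).Colorable 3 :=
    ⟨SimpleGraph.Coloring.mk (colf G cls) (fun {a b} hab => hcolprop a b hab)⟩
  exact ⟨AA G cls, hAG, hAcol, hAiso, hBcol, hBiso⟩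



namespace TTT

def path2 {V : Type*} (v x z : V) : SimpleGraph V where
  Adj a b := ((a = v ∧ b = x) ∨ (a = x ∧ b = v) ∨ (a = x ∧ b = z) ∨ (a = z ∧ b = x)) ∧ a ≠ b
  symm := ⟨by intro a b h; exact ⟨by tauto, h.2.symm⟩⟩
  loopless := ⟨by intro a h; exact h.2 rfl⟩

def edge1 {V : Type*} (v x : V) : SimpleGraph V where
  Adj a b := ((a = v ∧ b = x) ∨ (a = x ∧ b = v)) ∧ a ≠ b
  symm := ⟨by intro a b h; exact ⟨by tauto, h.2.symm⟩⟩
  loopless := ⟨by intro a h; exact h.2 rfl⟩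

end TTT

open TTT

lemma TTextend {V : Type*} [Fintype V] {k : ℕ} (G G' H : SimpleGraph V)
    (hsplit : ∀ a b, G.Adj a b ↔ (G'.Adj a b ∨ H.Adj a b))
    (hdisj : ∀ a b, G'.Adj a b → H.Adj a b → False)
    (f : Fin k → SimpleGraph V)
    (hle : ∀ i, f i ≤ G')
    (hpart : ∀ e ∈ G'.edgeSet, ∃! i, e ∈ (f i).edgeSet)
    (hgood : ∀ i, (f i).Colorable 3 ∧ NoIsolatedEdge (f i))
    (i₀ : Fin k)
    (hcol : (f i₀ ⊔ H).Colorable 3) (hiso : NoIsolatedEdge (f i₀ ⊔ H)) :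
    ∃ f' : Fin k → SimpleGraph V, (∀ i, f' i ≤ G) ∧
      (∀ e ∈ G.edgeSet, ∃! i, e ∈ (f' i).edgeSet) ∧
      (∀ i, (f' i).Colorable 3 ∧ NoIsolatedEdge (f' i)) := by
  classical
  have hG'le : G' ≤ G := fun {a b} h => (hsplit a b).2 (Or.inl h)
  have hHle : H ≤ G := fun {a b} h => (hsplit a b).2 (Or.inr h)
  refine ⟨Function.update f i₀ (f i₀ ⊔ H), ?_, ?_, ?_⟩
  · intro i
    by_cases hi : i = i₀
    · subst hi; rw [Function.update_self]; exact sup_le ((hle i).trans hG'le) hHle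
    · rw [Function.update_of_ne hi]; exact (hle i).trans hG'le
  · intro e he
    induction e using Sym2.ind with
    | _ a b =>
    rw [G.mem_edgeSet] at he
    rcases (hsplit a b).1 he with h | h
    · obtain ⟨i, hi, huniq⟩ := hpart s(a,b) ((G'.mem_edgeSet).2 h)
      refine ⟨i, ?_, ?_⟩
      · show s(a,b) ∈ (Function.update f i₀ (f i₀ ⊔ H) i).edgeSet
        by_cases hii : i = i₀
        · subst hii
          rw [Function.update_self, SimpleGraph.mem_edgeSet]
          exact (SimpleGraph.sup_adj _ _ _ _).2 (Or.inl ((SimpleGraph.mem_edgeSet _).1 hi))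
        · rw [Function.update_of_ne hii]; exact hi
      · intro j hj
        have hj' : s(a,b) ∈ (Function.update f i₀ (f i₀ ⊔ H) j).edgeSet := hj
        by_cases hjj : j = i₀
        · subst hjj
          rw [Function.update_self, SimpleGraph.mem_edgeSet] at hj'
          rcases (SimpleGraph.sup_adj _ _ _ _).1 hj' with h' | h'
          · exact huniq _ ((SimpleGraph.mem_edgeSet _).2 h')
          · exact absurd (hdisj a b h h') not_false
        · rw [Function.update_of_ne hjj] at hj'
          exact huniq j hj'
    · have hnG' : ¬ G'.Adj a b := fun h' => hdisj a b h' h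
      refine ⟨i₀, ?_, ?_⟩
      · show s(a,b) ∈ (Function.update f i₀ (f i₀ ⊔ H) i₀).edgeSet
        rw [Function.update_self, SimpleGraph.mem_edgeSet]
        exact (SimpleGraph.sup_adj _ _ _ _).2 (Or.inr h)
      · intro j hj
        have hj' : s(a,b) ∈ (Function.update f i₀ (f i₀ ⊔ H) j).edgeSet := hj
        by_cases hjj : j = i₀
        · exact hjj
        · rw [Function.update_of_ne hjj, SimpleGraph.mem_edgeSet] at hj'
          exact absurd ((hle j) hj') hnG'
  · intro i
    by_cases hi : i = i₀
    · subst hi; rw [Function.update_self]; exact ⟨hcol, hiso⟩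
    · rw [Function.update_of_ne hi]; exact hgood i




open TTT

set_option maxHeartbeats 2000000 in
open Classical in
theorem TTmain {V : Type*} [Fintype V] : ∀ (k : ℕ), 1 ≤ k → ∀ (n : ℕ) (G : SimpleGraph V),
    G.edgeFinset.card ≤ n → G.Colorable (3 ^ k) → NoIsolatedEdge G →
    ∃ f : Fin k → SimpleGraph V, (∀ i, f i ≤ G) ∧
      (∀ e ∈ G.edgeSet, ∃! i, e ∈ (f i).edgeSet) ∧
      (∀ i, (f i).Colorable 3 ∧ NoIsolatedEdge (f i)) := by
  intro k
  induction k with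
  | zero => intro h; exact absurd h (by omega)
  | succ k ihk =>
    intro _hk n
    induction n with
    | zero =>
      intro G hcard hχ hG
      have hempty : ∀ a b, ¬ G.Adj a b := by
        intro a b hab
        have hmem : s(a,b) ∈ G.edgeFinset :=
          SimpleGraph.mem_edgeFinset.2 ((G.mem_edgeSet).2 hab)
        have := Finset.card_pos.2 ⟨_, hmem⟩
        omega
      refine ⟨fun _ => ⊥, fun i => bot_le, ?_, ?_⟩
      · intro e he
        induction e using Sym2.ind with
        | _ a b =>
          rw [G.mem_edgeSet] at he
          exact absurd he (hempty a b)
      · intro i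
        constructor
        · exact ⟨SimpleGraph.Coloring.mk (fun _ => 0) (fun {a b} hab => absurd hab (by simp))⟩
        · intro u v huv; exact absurd huv (by simp)
    | succ n ihn =>
      intro G hcard hχ hG
      by_cases hk0 : k = 0
      · subst hk0
        refine ⟨fun _ => G, fun _ => le_rfl, ?_, ?_⟩
        · intro e he
          exact ⟨0, he, fun j _ => Fin.ext (by omega)⟩
        · intro i
          refine ⟨?_, hG⟩
          have h31 : (3:ℕ)^1 = 3 := pow_one 3
          rw [← h31]; exact hχ
      · have hk2 : 1 ≤ k := by omega
        by_cases hone : ∃ v x, G.Adj v x ∧ (∀ w, G.Adj v w → w = x)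
        · -- CASE A : a vertex of degree one
          obtain ⟨v, x, hvx, hvu⟩ := hone
          have hvne : v ≠ x := G.ne_of_adj hvx
          by_cases hzc : ∃ z, G.Adj x z ∧ z ≠ v ∧ (∀ w, G.Adj x w → w = v ∨ w = z) ∧
              (∀ w, G.Adj z w → w = x)
          · -- sub-case (i) : pendant path v-x-z
            obtain ⟨z, hxz, hzv, hxw, hzu⟩ := hzc
            have hxzne : x ≠ z := G.ne_of_adj hxz
            set D : Set (Sym2 V) := {s(v,x), s(x,z)} with hD
            set G' : SimpleGraph V := G.deleteEdges D with hG'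
            have hG'adj : ∀ a b, G'.Adj a b ↔ (G.Adj a b ∧ s(a,b) ∉ D) :=
              fun a b => SimpleGraph.deleteEdges_adj
            have hmemD : ∀ a b : V, s(a,b) ∈ D ↔
                ((a = v ∧ b = x) ∨ (a = x ∧ b = v) ∨ (a = x ∧ b = z) ∨ (a = z ∧ b = x)) := by
              intro a b
              simp only [hD, Set.mem_insert_iff, Set.mem_singleton_iff, Sym2.eq_iff]
              tauto
            set H : SimpleGraph V := path2 v x z with hH
            have hHadj : ∀ a b, H.Adj a b ↔
                (((a = v ∧ b = x) ∨ (a = x ∧ b = v) ∨ (a = x ∧ b = z) ∨ (a = z ∧ b = x)) ∧ a ≠ b) :=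
              fun a b => Iff.rfl
            have hHG : ∀ a b, H.Adj a b → G.Adj a b := by
              intro a b hab
              rcases ((hHadj a b).1 hab).1 with ⟨h1,h2⟩|⟨h1,h2⟩|⟨h1,h2⟩|⟨h1,h2⟩ <;> subst h1 <;> subst h2
              · exact hvx
              · exact hvx.symm
              · exact hxz
              · exact hxz.symm
            have hsplit : ∀ a b, G.Adj a b ↔ (G'.Adj a b ∨ H.Adj a b) := by
              intro a b
              constructor
              · intro hab
                by_cases hd : s(a,b) ∈ D
                · exact Or.inr ((hHadj a b).2 ⟨(hmemD a b).1 hd, G.ne_of_adj hab⟩)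
                · exact Or.inl ((hG'adj a b).2 ⟨hab, hd⟩)
              · intro hab
                rcases hab with h | h
                · exact ((hG'adj a b).1 h).1
                · exact hHG a b h
            have hdisj : ∀ a b, G'.Adj a b → H.Adj a b → False := by
              intro a b h1 h2
              exact ((hG'adj a b).1 h1).2 ((hmemD a b).2 ((hHadj a b).1 h2).1)
            have hisoV : ∀ w, ¬ G'.Adj v w := by
              intro w hw
              have hwx : w = x := hvu w ((hG'adj v w).1 hw).1
              subst hwx
              exact ((hG'adj v w).1 hw).2 ((hmemD v w).2 (by tauto))
            have hisoX : ∀ w, ¬ G'.Adj x w := by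
              intro w hw
              have := hxw w ((hG'adj x w).1 hw).1
              exact ((hG'adj x w).1 hw).2 ((hmemD x w).2 (by tauto))
            have hisoZ : ∀ w, ¬ G'.Adj z w := by
              intro w hw
              have := hzu w ((hG'adj z w).1 hw).1
              exact ((hG'adj z w).1 hw).2 ((hmemD z w).2 (by tauto))
            have hG'iso : NoIsolatedEdge G' := by
              intro a b hab
              have hav : a ≠ v := fun h => hisoV b (h ▸ hab)
              have hax : a ≠ x := fun h => hisoX b (h ▸ hab)
              have haz : a ≠ z := fun h => hisoZ b (h ▸ hab)
              have hbv : b ≠ v := fun h => hisoV a (h ▸ hab.symm)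
              have hbx : b ≠ x := fun h => hisoX a (h ▸ hab.symm)
              have hbz : b ≠ z := fun h => hisoZ a (h ▸ hab.symm)
              obtain ⟨w, hw⟩ := hG a b ((hG'adj a b).1 hab).1
              rcases hw with ⟨hw1, hw2⟩ | ⟨hw1, hw2⟩
              · refine ⟨w, Or.inl ⟨(hG'adj a w).2 ⟨hw1, ?_⟩, hw2⟩⟩
                intro hd
                rcases (hmemD a w).1 hd with ⟨h1,_⟩|⟨h1,_⟩|⟨h1,_⟩|⟨h1,_⟩
                · exact hav h1
                · exact hax h1
                · exact hax h1
                · exact haz h1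
              · refine ⟨w, Or.inr ⟨(hG'adj b w).2 ⟨hw1, ?_⟩, hw2⟩⟩
                intro hd
                rcases (hmemD b w).1 hd with ⟨h1,_⟩|⟨h1,_⟩|⟨h1,_⟩|⟨h1,_⟩
                · exact hbv h1
                · exact hbx h1
                · exact hbx h1
                · exact hbz h1
            have hcard' : G'.edgeFinset.card ≤ n := by
              have hsub : G'.edgeFinset ⊆ G.edgeFinset :=
                SimpleGraph.edgeFinset_mono (SimpleGraph.deleteEdges_le D)
              have hmem : s(v,x) ∈ G.edgeFinset :=
                SimpleGraph.mem_edgeFinset.2 ((G.mem_edgeSet).2 hvx)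
              have hnmem : s(v,x) ∉ G'.edgeFinset := by
                intro hc
                have := SimpleGraph.mem_edgeFinset.1 hc
                rw [SimpleGraph.mem_edgeSet] at this
                exact ((hG'adj v x).1 this).2 ((hmemD v x).2 (by tauto))
              have := Finset.card_lt_card ((Finset.ssubset_iff_of_subset hsub).2 ⟨_, hmem, hnmem⟩)
              omega
            have hχ' : G'.Colorable (3 ^ (k+1)) := hχ.mono_left (SimpleGraph.deleteEdges_le D)
            obtain ⟨g, hgle, hgpart, hggood⟩ := ihn G' (by convert hcard') hχ' hG'iso
            -- colour g 0 ⊔ H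
            obtain ⟨c⟩ := (hggood 0).1
            have hnt : ∀ a b, (g 0).Adj a b → (a ≠ v ∧ a ≠ x ∧ a ≠ z) := by
              intro a b hab
              refine ⟨?_, ?_, ?_⟩
              · intro h; exact hisoV b (h ▸ (hgle 0 hab))
              · intro h; exact hisoX b (h ▸ (hgle 0 hab))
              · intro h; exact hisoZ b (h ▸ (hgle 0 hab))
            set c₂ : V → Fin 3 := fun w => if w = x then 1 else if w = v then 0 else
              if w = z then 0 else c w with hc₂
            have hc₂x : c₂ x = 1 := by simp [hc₂]
            have hc₂v : c₂ v = 0 := by simp [hc₂, hvne]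
            have hzx : z ≠ x := fun h => hxzne h.symm
            have hc₂z : c₂ z = 0 := by simp [hc₂, hzx, hzv]
            have hc₂other : ∀ w, w ≠ v → w ≠ x → w ≠ z → c₂ w = c w := by
              intro w h1 h2 h3; simp [hc₂, h1, h2, h3]
            have hcol : ((g 0) ⊔ H).Colorable 3 := by
              refine ⟨SimpleGraph.Coloring.mk c₂ ?_⟩
              intro a b hab
              rcases (SimpleGraph.sup_adj _ _ _ _).1 hab with h | h
              · have ha := hnt a b h
                have hb := hnt b a h.symm
                rw [hc₂other a ha.1 ha.2.1 ha.2.2, hc₂other b hb.1 hb.2.1 hb.2.2]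
                exact c.valid h
              · have hvx1 : c₂ v ≠ c₂ x := by rw [hc₂v, hc₂x]; decide
                have hxz1 : c₂ x ≠ c₂ z := by rw [hc₂x, hc₂z]; decide
                rcases ((hHadj a b).1 h).1 with ⟨h1,h2⟩|⟨h1,h2⟩|⟨h1,h2⟩|⟨h1,h2⟩ <;> rw [h1, h2]
                · exact hvx1
                · exact hvx1.symm
                · exact hxz1
                · exact hxz1.symm
            have hiso : NoIsolatedEdge ((g 0) ⊔ H) := by
              intro a b hab
              rcases (SimpleGraph.sup_adj _ _ _ _).1 hab with h | h
              · obtain ⟨w, hw⟩ := (hggood 0).2 a b h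
                rcases hw with ⟨hw1, hw2⟩ | ⟨hw1, hw2⟩
                · exact ⟨w, Or.inl ⟨(SimpleGraph.sup_adj _ _ _ _).2 (Or.inl hw1), hw2⟩⟩
                · exact ⟨w, Or.inr ⟨(SimpleGraph.sup_adj _ _ _ _).2 (Or.inl hw1), hw2⟩⟩
              · have hHxz : H.Adj x z := (hHadj x z).2 ⟨by tauto, hxzne⟩
                have hHxv : H.Adj x v := (hHadj x v).2 ⟨by tauto, fun h' => hvne h'.symm⟩
                rcases ((hHadj a b).1 h).1 with ⟨h1,h2⟩|⟨h1,h2⟩|⟨h1,h2⟩|⟨h1,h2⟩ <;> rw [h1, h2]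
                · exact ⟨z, Or.inr ⟨(SimpleGraph.sup_adj _ _ _ _).2 (Or.inr hHxz), hzv⟩⟩
                · exact ⟨z, Or.inl ⟨(SimpleGraph.sup_adj _ _ _ _).2 (Or.inr hHxz), hzv⟩⟩
                · exact ⟨v, Or.inl ⟨(SimpleGraph.sup_adj _ _ _ _).2 (Or.inr hHxv),
                    fun h' => hzv h'.symm⟩⟩
                · exact ⟨v, Or.inr ⟨(SimpleGraph.sup_adj _ _ _ _).2 (Or.inr hHxv),
                    fun h' => hzv h'.symm⟩⟩
            exact TTextend G G' H hsplit hdisj g hgle hgpart hggood 0 hcol hiso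
          · -- sub-case (ii) : single pendant edge v-x
            set D : Set (Sym2 V) := {s(v,x)} with hD
            set G' : SimpleGraph V := G.deleteEdges D with hG'
            have hG'adj : ∀ a b, G'.Adj a b ↔ (G.Adj a b ∧ s(a,b) ∉ D) :=
              fun a b => SimpleGraph.deleteEdges_adj
            have hmemD : ∀ a b : V, s(a,b) ∈ D ↔ ((a = v ∧ b = x) ∨ (a = x ∧ b = v)) := by
              intro a b
              simp only [hD, Set.mem_singleton_iff, Sym2.eq_iff]
            set H : SimpleGraph V := edge1 v x with hH
            have hHadj : ∀ a b, H.Adj a b ↔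
                (((a = v ∧ b = x) ∨ (a = x ∧ b = v)) ∧ a ≠ b) := fun a b => Iff.rfl
            have hHG : ∀ a b, H.Adj a b → G.Adj a b := by
              intro a b hab
              rcases ((hHadj a b).1 hab).1 with ⟨h1,h2⟩|⟨h1,h2⟩ <;> subst h1 <;> subst h2
              · exact hvx
              · exact hvx.symm
            have hsplit : ∀ a b, G.Adj a b ↔ (G'.Adj a b ∨ H.Adj a b) := by
              intro a b
              constructor
              · intro hab
                by_cases hd : s(a,b) ∈ D
                · exact Or.inr ((hHadj a b).2 ⟨(hmemD a b).1 hd, G.ne_of_adj hab⟩)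
                · exact Or.inl ((hG'adj a b).2 ⟨hab, hd⟩)
              · intro hab
                rcases hab with h | h
                · exact ((hG'adj a b).1 h).1
                · exact hHG a b h
            have hdisj : ∀ a b, G'.Adj a b → H.Adj a b → False := by
              intro a b h1 h2
              exact ((hG'adj a b).1 h1).2 ((hmemD a b).2 ((hHadj a b).1 h2).1)
            have hisoV : ∀ w, ¬ G'.Adj v w := by
              intro w hw
              have hwx : w = x := hvu w ((hG'adj v w).1 hw).1
              subst hwx
              exact ((hG'adj v w).1 hw).2 ((hmemD v w).2 (by tauto))
            -- companions at x inside G'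
            have hxcomp : ∀ bb, G'.Adj x bb →
                ∃ w, (G'.Adj x w ∧ w ≠ bb) ∨ (G'.Adj bb w ∧ w ≠ x) := by
              intro bb hxbb
              have hGxbb : G.Adj x bb := ((hG'adj x bb).1 hxbb).1
              have hbbv : bb ≠ v := by
                intro h
                subst h
                exact ((hG'adj x bb).1 hxbb).2 ((hmemD x bb).2 (by tauto))
              by_cases hw : ∃ w, G.Adj x w ∧ w ≠ v ∧ w ≠ bb
              · obtain ⟨w, h1, h2, h3⟩ := hw
                refine ⟨w, Or.inl ⟨(hG'adj x w).2 ⟨h1, ?_⟩, h3⟩⟩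
                intro hd
                rcases (hmemD x w).1 hd with ⟨h4,_⟩|⟨_,h5⟩
                · exact hvne h4.symm
                · exact h2 h5
              · push_neg at hw
                have hxall : ∀ w, G.Adj x w → w = v ∨ w = bb := by
                  intro w hw'
                  by_cases h1 : w = v
                  · exact Or.inl h1
                  · exact Or.inr (hw w hw' h1)
                have hnz : ¬ (∀ w, G.Adj bb w → w = x) := by
                  intro hzz
                  exact hzc ⟨bb, hGxbb, hbbv, hxall, hzz⟩
                push_neg at hnz
                obtain ⟨w, hw1, hw2⟩ := hnz
                have hbbx : bb ≠ x := fun h => G.loopless.irrefl x (h ▸ hGxbb)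
                refine ⟨w, Or.inr ⟨(hG'adj bb w).2 ⟨hw1, ?_⟩, hw2⟩⟩
                intro hd
                rcases (hmemD bb w).1 hd with ⟨h4,_⟩|⟨h4,_⟩
                · exact hbbv h4
                · exact hbbx h4
            have hG'iso : NoIsolatedEdge G' := by
              intro a b hab
              have hav : a ≠ v := fun h => hisoV b (h ▸ hab)
              have hbv : b ≠ v := fun h => hisoV a (h ▸ hab.symm)
              by_cases hax : a = x
              · subst hax; exact hxcomp b hab
              · by_cases hbx : b = x
                · subst hbx
                  obtain ⟨w, hw⟩ := hxcomp a hab.symm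
                  rcases hw with ⟨hw1, hw2⟩ | ⟨hw1, hw2⟩
                  · exact ⟨w, Or.inr ⟨hw1, hw2⟩⟩
                  · exact ⟨w, Or.inl ⟨hw1, hw2⟩⟩
                · obtain ⟨w, hw⟩ := hG a b ((hG'adj a b).1 hab).1
                  rcases hw with ⟨hw1, hw2⟩ | ⟨hw1, hw2⟩
                  · refine ⟨w, Or.inl ⟨(hG'adj a w).2 ⟨hw1, ?_⟩, hw2⟩⟩
                    intro hd
                    rcases (hmemD a w).1 hd with ⟨h1,_⟩|⟨h1,_⟩
                    · exact hav h1
                    · exact hax h1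
                  · refine ⟨w, Or.inr ⟨(hG'adj b w).2 ⟨hw1, ?_⟩, hw2⟩⟩
                    intro hd
                    rcases (hmemD b w).1 hd with ⟨h1,_⟩|⟨h1,_⟩
                    · exact hbv h1
                    · exact hbx h1
            have hcard' : G'.edgeFinset.card ≤ n := by
              have hsub : G'.edgeFinset ⊆ G.edgeFinset :=
                SimpleGraph.edgeFinset_mono (SimpleGraph.deleteEdges_le D)
              have hmem : s(v,x) ∈ G.edgeFinset :=
                SimpleGraph.mem_edgeFinset.2 ((G.mem_edgeSet).2 hvx)
              have hnmem : s(v,x) ∉ G'.edgeFinset := by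
                intro hc
                have := SimpleGraph.mem_edgeFinset.1 hc
                rw [SimpleGraph.mem_edgeSet] at this
                exact ((hG'adj v x).1 this).2 ((hmemD v x).2 (by tauto))
              have := Finset.card_lt_card ((Finset.ssubset_iff_of_subset hsub).2 ⟨_, hmem, hnmem⟩)
              omega
            have hχ' : G'.Colorable (3 ^ (k+1)) := hχ.mono_left (SimpleGraph.deleteEdges_le D)
            obtain ⟨g, hgle, hgpart, hggood⟩ := ihn G' (by convert hcard') hχ' hG'iso
            -- x has an edge in G'
            have hxedge : ∃ w₀, G'.Adj x w₀ := by
              obtain ⟨y, hy⟩ := hG v x hvx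
              rcases hy with ⟨hy1, hy2⟩ | ⟨hy1, hy2⟩
              · exact absurd (hvu y hy1) hy2
              · refine ⟨y, (hG'adj x y).2 ⟨hy1, ?_⟩⟩
                intro hd
                rcases (hmemD x y).1 hd with ⟨h1,_⟩|⟨_,h2⟩
                · exact hvne h1.symm
                · exact hy2 h2
            obtain ⟨w₀, hxw₀⟩ := hxedge
            obtain ⟨i₀, hi₀, _⟩ := hgpart s(x,w₀) ((G'.mem_edgeSet).2 hxw₀)
            have hgi₀ : (g i₀).Adj x w₀ := (SimpleGraph.mem_edgeSet _).1 hi₀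
            obtain ⟨c⟩ := (hggood i₀).1
            have hnt : ∀ a b, (g i₀).Adj a b → a ≠ v := by
              intro a b hab h
              exact hisoV b (h ▸ (hgle i₀ hab))
            set d : Fin 3 := if c x = 0 then 1 else 0 with hd
            have hdcx : d ≠ c x := by
              by_cases h : c x = 0
              · rw [hd, if_pos h, h]; decide
              · rw [hd, if_neg h]; exact fun he => h he.symm
            set c₂ : V → Fin 3 := fun w => if w = v then d else c w with hc₂
            have hc₂v : c₂ v = d := by simp [hc₂]
            have hc₂other : ∀ w, w ≠ v → c₂ w = c w := by
              intro w h1; simp [hc₂, h1]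
            have hcol : ((g i₀) ⊔ H).Colorable 3 := by
              refine ⟨SimpleGraph.Coloring.mk c₂ ?_⟩
              intro a b hab
              rcases (SimpleGraph.sup_adj _ _ _ _).1 hab with h | h
              · rw [hc₂other a (hnt a b h), hc₂other b (hnt b a h.symm)]
                exact c.valid h
              · have hgoal : c₂ v ≠ c₂ x := by
                  rw [hc₂v, hc₂other x (fun h' => hvne h'.symm)]; exact hdcx
                rcases ((hHadj a b).1 h).1 with ⟨h1,h2⟩|⟨h1,h2⟩ <;> rw [h1, h2]
                · exact hgoal
                · exact hgoal.symm
            have hw₀v : w₀ ≠ v := by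
              intro h
              subst h
              exact hisoV x hxw₀.symm
            have hiso : NoIsolatedEdge ((g i₀) ⊔ H) := by
              intro a b hab
              rcases (SimpleGraph.sup_adj _ _ _ _).1 hab with h | h
              · obtain ⟨w, hw⟩ := (hggood i₀).2 a b h
                rcases hw with ⟨hw1, hw2⟩ | ⟨hw1, hw2⟩
                · exact ⟨w, Or.inl ⟨(SimpleGraph.sup_adj _ _ _ _).2 (Or.inl hw1), hw2⟩⟩
                · exact ⟨w, Or.inr ⟨(SimpleGraph.sup_adj _ _ _ _).2 (Or.inl hw1), hw2⟩⟩
              · rcases ((hHadj a b).1 h).1 with ⟨h1,h2⟩|⟨h1,h2⟩ <;> rw [h1, h2]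
                · exact ⟨w₀, Or.inr ⟨(SimpleGraph.sup_adj _ _ _ _).2 (Or.inl hgi₀), hw₀v⟩⟩
                · exact ⟨w₀, Or.inl ⟨(SimpleGraph.sup_adj _ _ _ _).2 (Or.inl hgi₀), hw₀v⟩⟩
            exact TTextend G G' H hsplit hdisj g hgle hgpart hggood i₀ hcol hiso
        · -- CASE B : no vertex of degree one
          push_neg at hone
          obtain ⟨cls, hlt, hP1, hP2⟩ := TTdominance G (3 ^ (k+1)) hχ
          obtain ⟨A, hAG, hAcol, hAiso, hBcol, hBiso⟩ := TTcaseB G k hone cls hlt hP1 hP2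
          obtain ⟨g, hgle, hgpart, hggood⟩ :=
            ihk hk2 _ (G \ A) le_rfl hBcol hBiso
          refine ⟨Fin.cons A g, ?_, ?_, ?_⟩
          · intro i
            refine Fin.cases ?_ ?_ i
            · rw [Fin.cons_zero]; exact hAG
            · intro j; rw [Fin.cons_succ]; exact (hgle j).trans sdiff_le
          · intro e he
            induction e using Sym2.ind with
            | _ a b =>
            rw [G.mem_edgeSet] at he
            by_cases hA : A.Adj a b
            · refine ⟨0, ?_, ?_⟩
              · show s(a,b) ∈ ((Fin.cons A g : Fin (k+1) → SimpleGraph V) 0).edgeSet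
                rw [Fin.cons_zero, SimpleGraph.mem_edgeSet]
                exact hA
              · intro j hj
                have hj' : s(a,b) ∈ ((Fin.cons A g : Fin (k+1) → SimpleGraph V) j).edgeSet := hj
                revert hj'
                refine Fin.cases ?_ ?_ j
                · intro _; rfl
                · intro j' hj'
                  rw [Fin.cons_succ, SimpleGraph.mem_edgeSet] at hj'
                  have hBadj : (G \ A).Adj a b := (hgle j') hj'
                  exact absurd hA ((SimpleGraph.sdiff_adj G A a b).1 hBadj).2
            · have hB : (G \ A).Adj a b := (SimpleGraph.sdiff_adj G A a b).2 ⟨he, hA⟩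
              obtain ⟨i, hi, hiuniq⟩ := hgpart s(a,b) (((G \ A).mem_edgeSet).2 hB)
              refine ⟨i.succ, ?_, ?_⟩
              · show s(a,b) ∈ ((Fin.cons A g : Fin (k+1) → SimpleGraph V) i.succ).edgeSet
                rw [Fin.cons_succ]
                exact hi
              · intro j hj
                have hj' : s(a,b) ∈ ((Fin.cons A g : Fin (k+1) → SimpleGraph V) j).edgeSet := hj
                revert hj'
                refine Fin.cases ?_ ?_ j
                · intro hj0
                  rw [Fin.cons_zero, SimpleGraph.mem_edgeSet] at hj0
                  exact absurd hj0 hA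
                · intro j' hj'
                  rw [Fin.cons_succ] at hj'
                  rw [hiuniq j' hj']
          · intro i
            refine Fin.cases ?_ ?_ i
            · rw [Fin.cons_zero]; exact ⟨hAcol, hAiso⟩
            · intro j; rw [Fin.cons_succ]; exact hggood j


end TTTproof

/-- Every graph without isolated edges with `χ(G) ≤ 3^k` decomposes into `k`
subgraphs, each 3-colourable and without isolated edges. -/
theorem stmt_3 {V : Type*} [Fintype V] (k : ℕ) (hk : 1 ≤ k) (G : SimpleGraph V)
    (hχ : G.Colorable (3 ^ k)) (hG : NoIsolatedEdge G) :
    ∃ f : Fin k → SimpleGraph V, (∀ i, f i ≤ G) ∧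
      (∀ e ∈ G.edgeSet, ∃! i, e ∈ (f i).edgeSet) ∧
      (∀ i, (f i).Colorable 3 ∧ NoIsolatedEdge (f i)) := by
  classical
  exact TTmain k hk G.edgeFinset.card G le_rfl hχ hG
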